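/- For any nonzero z in the cyclotomic field Q(ζ_{2n}), if arg(z) is a rational multiple of π then arg(z) = kπ/(2n) for some integer k. In other words, elements of Q(ζ_{2n}) with rational argument lie on one of the 2n straight lines through 0 tilted by kπ/(2n) against the real axis. -/

import Mathlib

open Complex

/-- Any nonzero `z ∈ ℚ(ζ_{2n})` with rational argument has argument an integer
multiple of `π/(2n)`.  We assume (as in the paper's context) that the roots of unity
in `ℚ(ζ_{2n})` are exactly `± ζ_{2n}^k`. -/
theorem stmt2 (n : ℕ) (hn : 1 ≤ n)
    (ζ : ℂ) (hζ : ζ = Complex.exp (2 * Real.pi * Complex.I / (2 * n)))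
    (hru : ∀ w : ℂ, w ∈ Algebra.adjoin ℚ {ζ} → (∃ m : ℕ, 0 < m ∧ w ^ m = 1) →
      ∃ k : ℤ, w = ζ ^ k ∨ w = -ζ ^ k)
    (z : ℂ) (hz : z ∈ Algebra.adjoin ℚ {ζ}) (hz0 : z ≠ 0)
    (harg : ∃ q : ℚ, z.arg = q * Real.pi) :
    ∃ k : ℤ, z.arg = k * Real.pi / (2 * n) := by
  obtain ⟨q, hq⟩ := harg
  have hn0 : (n : ℝ) ≠ 0 := Nat.cast_ne_zero.mpr (by omega)
  have hnC : (n : ℂ) ≠ 0 := by exact_mod_cast hn0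
  have hζ' : ζ = Complex.exp ((Real.pi / n : ℝ) * Complex.I) := by
    rw [hζ]; congr 1; push_cast; field_simp
  have hζ2n : ζ ^ (2 * n) = 1 := by
    rw [hζ', ← Complex.exp_nat_mul]
    rw [show ((2 * n : ℕ) : ℂ) * ((Real.pi / n : ℝ) * Complex.I)
        = 2 * Real.pi * Complex.I by push_cast; field_simp]
    exact Complex.exp_two_pi_mul_I
  have hζ0 : ζ ≠ 0 := by rw [hζ]; exact Complex.exp_ne_zero _
  have habsζ : ‖ζ‖ = 1 := by rw [hζ']; exact Complex.norm_exp_ofReal_mul_I _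
  -- conj ζ = ζ⁻¹ = ζ ^ (2n-1)
  have hconjζ : (starRingEnd ℂ) ζ = ζ ^ (2 * n - 1) := by
    have h1 : ζ * ζ ^ (2 * n - 1) = 1 := by
      rw [← pow_succ', show 2 * n - 1 + 1 = 2 * n by omega, hζ2n]
    rw [← Complex.inv_eq_conj habsζ]
    exact inv_eq_of_mul_eq_one_right h1
  set A := Algebra.adjoin ℚ {ζ} with hA
  -- conj z ∈ A
  have hconjz : (starRingEnd ℂ) z ∈ A := by
    refine Algebra.adjoin_induction (p := fun x _ => (starRingEnd ℂ) x ∈ A)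
      ?_ ?_ ?_ ?_ hz
    · intro x hx
      rw [Set.mem_singleton_iff] at hx
      rw [hx, hconjζ]
      exact pow_mem (Algebra.subset_adjoin (Set.mem_singleton ζ)) _
    · intro r
      rw [show (algebraMap ℚ ℂ) r = ((r : ℝ) : ℂ) by push_cast; norm_num,
        Complex.conj_ofReal]
      exact Subalgebra.algebraMap_mem A r
    · intro x y _ _ ihx ihy
      rw [map_add]; exact add_mem ihx ihy
    · intro x y _ _ ihx ihy
      rw [map_mul]; exact mul_mem ihx ihy
  have hintζ : IsIntegral ℚ ζ := by
    refine ⟨Polynomial.X ^ (2 * n) - Polynomial.C 1, ?_, ?_⟩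
    · exact Polynomial.monic_X_pow_sub_C 1 (by omega)
    · simp [hζ2n]
  have hAint : Algebra.IsIntegral ℚ A :=
    Algebra.IsIntegral.adjoin (by rintro x hx; rw [Set.mem_singleton_iff] at hx; rwa [hx])
  have halgconj : IsAlgebraic ℚ ((starRingEnd ℂ) z) := by
    have := (hAint.isIntegral ⟨(starRingEnd ℂ) z, hconjz⟩).map A.val
    exact this.isAlgebraic
  have hinvmem : ((starRingEnd ℂ) z)⁻¹ ∈ A :=
    Subalgebra.inv_mem_of_algebraic (A := A) (x := ⟨(starRingEnd ℂ) z, hconjz⟩) halgconj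
  set w : ℂ := z * ((starRingEnd ℂ) z)⁻¹ with hwdef
  have hwmem : w ∈ A := mul_mem hz hinvmem
  have habs0 : ((‖z‖ : ℝ) : ℂ) ≠ 0 := by
    simpa using (norm_ne_zero_iff.mpr hz0)
  have hzexp : z = (‖z‖ : ℝ) * Complex.exp (z.arg * Complex.I) :=
    (Complex.norm_mul_exp_arg_mul_I z).symm
  have hconjexp : (starRingEnd ℂ) z
      = (‖z‖ : ℝ) * Complex.exp (-(z.arg * Complex.I)) := by
    conv_lhs => rw [hzexp]
    rw [map_mul, Complex.conj_ofReal, ← Complex.exp_conj, map_mul, Complex.conj_ofReal,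
      Complex.conj_I, mul_neg]
  have hw : w = Complex.exp (2 * z.arg * Complex.I) := by
    rw [hwdef, hconjexp]
    nth_rewrite 1 [hzexp]
    rw [mul_inv, ← Complex.exp_neg, neg_neg, mul_mul_mul_comm, mul_inv_cancel₀ habs0,
      one_mul, ← Complex.exp_add]
    ring_nf
  have hwru : ∃ m : ℕ, 0 < m ∧ w ^ m = 1 := by
    refine ⟨q.den, q.pos, ?_⟩
    rw [hw, ← Complex.exp_nat_mul]
    rw [show ((q.den : ℕ) : ℂ) * (2 * (z.arg : ℂ) * Complex.I)
        = (q.num : ℤ) * (2 * Real.pi * Complex.I) by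
      have hc : (q : ℂ) * q.den = q.num := by exact_mod_cast Rat.mul_den_eq_num q
      rw [hq]
      push_cast
      linear_combination (2 * (Real.pi : ℂ) * Complex.I) * hc]
    exact Complex.exp_int_mul_two_pi_mul_I _
  obtain ⟨k, hk⟩ := hru w hwmem hwru
  have key : ∀ s : ℝ, Complex.exp (2 * z.arg * Complex.I) = Complex.exp (s * Complex.I) →
      ∃ t : ℤ, 2 * z.arg = s + t * (2 * Real.pi) := by
    intro s hs
    rw [Complex.exp_eq_exp_iff_exists_int] at hs
    obtain ⟨t, ht⟩ := hs
    refine ⟨t, ?_⟩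
    have := congrArg Complex.im ht
    simpa [Complex.add_im, Complex.mul_im] using this
  have hζk : ζ ^ k = Complex.exp ((k * (Real.pi / n) : ℝ) * Complex.I) := by
    rw [hζ', ← Complex.exp_int_mul]
    congr 1
    push_cast
    ring
  rcases hk with hk | hk
  · rw [hw, hζk] at hk
    obtain ⟨t, ht⟩ := key _ hk
    refine ⟨k + 2 * n * t, ?_⟩
    push_cast
    field_simp
    field_simp at ht
    linarith
  · rw [hw, hζk] at hk
    have : Complex.exp (2 * z.arg * Complex.I)
        = Complex.exp (((k * (Real.pi / n) + Real.pi : ℝ)) * Complex.I) := by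
      rw [hk]
      push_cast
      rw [add_mul, Complex.exp_add, Complex.exp_pi_mul_I]
      ring
    obtain ⟨t, ht⟩ := key _ this
    refine ⟨k + n + 2 * n * t, ?_⟩
    push_cast
    field_simp
    field_simp at ht
    linarith
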